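/- arXiv:2602.21574 — 4 statements merged into one kernel-verified Lean document; each statement's English description precedes it below -/
import Mathlib

section
/- Let H be a real Hilbert space, and let φ⁺, φ, μ ∈ H, r⁺, r ∈ ℝ, b ∈ H, and τ > 0. Suppose the following three relations hold: (i) ⟪(φ⁺ - φ)/τ, μ⟫ = -‖μ‖², (ii) ⟪μ, (φ⁺ - φ)/τ⟫ = (‖φ⁺‖² - ‖φ‖² + ‖φ⁺ - φ‖²)/(2τ) + r⁺ ⟪b, (φ⁺ - φ)/τ⟫, and (iii) ((r⁺)² - r² + (r⁺ - r)²)/τ = r⁺ ⟪b, (φ⁺ - φ)/τ⟫. Then (‖φ⁺‖²/2 + (r⁺)²) - (‖φ‖²/2 + r²) + ‖φ⁺ - φ‖²/2 + (r⁺ - r)² = -τ ‖μ‖². -/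
theorem sav_discrete_energy_identity
    {H : Type*} [NormedAddCommGroup H] [InnerProductSpace ℝ H] [CompleteSpace H]
    (φplus φ μ b : H) (rplus r τ : ℝ) (hτ : 0 < τ)
    (h1 : (inner ℝ ((τ⁻¹ : ℝ) • (φplus - φ)) μ : ℝ) = -‖μ‖ ^ 2)
    (h2 : (inner ℝ μ ((τ⁻¹ : ℝ) • (φplus - φ)) : ℝ) =
      (‖φplus‖ ^ 2 - ‖φ‖ ^ 2 + ‖φplus - φ‖ ^ 2) / (2 * τ)
        + rplus * (inner ℝ b ((τ⁻¹ : ℝ) • (φplus - φ)) : ℝ))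
    (h3 : (rplus ^ 2 - r ^ 2 + (rplus - r) ^ 2) / τ =
      rplus * (inner ℝ b ((τ⁻¹ : ℝ) • (φplus - φ)) : ℝ)) :
    (‖φplus‖ ^ 2 / 2 + rplus ^ 2) - (‖φ‖ ^ 2 / 2 + r ^ 2)
      + ‖φplus - φ‖ ^ 2 / 2 + (rplus - r) ^ 2 = -τ * ‖μ‖ ^ 2 := by
  rw [real_inner_comm] at h1
  rw [h1, ← h3] at h2
  have hτ' : τ ≠ 0 := ne_of_gt hτ
  field_simp at h2
  nlinarith [h2]
end

section
/- Under the hypotheses of the abstract discrete SAV energy identity, the discrete total energy is monotonically nonincreasing: ‖φ⁺‖²/2 + (r⁺)² ≤ ‖φ‖²/2 + r². -/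
theorem sav_discrete_energy_decay
    {H : Type*} [NormedAddCommGroup H] [InnerProductSpace ℝ H] [CompleteSpace H]
    (φplus φ μ b : H) (rplus r τ : ℝ) (hτ : 0 < τ)
    (h1 : (inner ℝ ((τ⁻¹ : ℝ) • (φplus - φ)) μ : ℝ) = -‖μ‖ ^ 2)
    (h2 : (inner ℝ μ ((τ⁻¹ : ℝ) • (φplus - φ)) : ℝ) =
      (‖φplus‖ ^ 2 - ‖φ‖ ^ 2 + ‖φplus - φ‖ ^ 2) / (2 * τ)
        + rplus * (inner ℝ b ((τ⁻¹ : ℝ) • (φplus - φ)) : ℝ))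
    (h3 : (rplus ^ 2 - r ^ 2 + (rplus - r) ^ 2) / τ =
      rplus * (inner ℝ b ((τ⁻¹ : ℝ) • (φplus - φ)) : ℝ)) :
    ‖φplus‖ ^ 2 / 2 + rplus ^ 2 ≤ ‖φ‖ ^ 2 / 2 + r ^ 2 := by
  rw [real_inner_comm] at h1
  have key : (‖φplus‖ ^ 2 - ‖φ‖ ^ 2 + ‖φplus - φ‖ ^ 2) / (2 * τ)
      + (rplus ^ 2 - r ^ 2 + (rplus - r) ^ 2) / τ = -‖μ‖ ^ 2 := by
    rw [h3]; linarith [h2, h1]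
  have h4 : (0:ℝ) ≤ ‖μ‖ ^ 2 := sq_nonneg _
  have h5 : (0:ℝ) ≤ ‖φplus - φ‖ ^ 2 := sq_nonneg _
  have h6 : (0:ℝ) ≤ (rplus - r) ^ 2 := sq_nonneg _
  have hτ' : (0:ℝ) < τ := hτ
  have := key
  field_simp at this
  nlinarith [mul_pos hτ' hτ']
end

section
/- Let V be a finite-dimensional real inner product space with inner product ⟪·,·⟫ and a seminorm induced by a positive semidefinite symmetric bilinear form a(·,·) (representing ⟪∇·,∇·⟫). Let b ∈ V, r ∈ ℝ unknowns, τ > 0. Suppose (φ, μ, r) ∈ V × V × ℝ satisfies the homogeneous system: (1) ⟪φ, u⟫ + τ a(μ, u) = 0 for all u ∈ V; (2) ⟪μ, v⟫ - a(φ, v) - r⟪b, v⟫ = 0 for all v ∈ V; (3) r - ⟪b/2, φ⟫ = 0 (i.e., r = ½⟪b, φ⟫). Then φ = 0, μ = 0, and r = 0. -/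
theorem sav_homogeneous_trivial_solution
    {V : Type*} [NormedAddCommGroup V] [InnerProductSpace ℝ V] [FiniteDimensional ℝ V]
    (a : V →ₗ[ℝ] V →ₗ[ℝ] ℝ)
    (ha_symm : ∀ x y : V, a x y = a y x)
    (ha_psd : ∀ x : V, 0 ≤ a x x)
    (b : V) (τ : ℝ) (hτ : 0 < τ)
    (φ μ : V) (r : ℝ)
    (h1 : ∀ u : V, (inner ℝ φ u : ℝ) + τ * a μ u = 0)
    (h2 : ∀ v : V, (inner ℝ μ v : ℝ) - a φ v - r * (inner ℝ b v : ℝ) = 0)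
    (h3 : r - (inner ℝ ((2⁻¹ : ℝ) • b) φ : ℝ) = 0) :
    φ = 0 ∧ μ = 0 ∧ r = 0 := by
  have hbφ : (inner ℝ b φ : ℝ) = 2 * r := by
    have := h3
    rw [real_inner_smul_left] at this
    linarith
  have e1 : (inner ℝ φ μ : ℝ) + τ * a μ μ = 0 := h1 μ
  have e2 : (inner ℝ μ φ : ℝ) - a φ φ - r * (inner ℝ b φ : ℝ) = 0 := h2 φ
  have hsym : (inner ℝ μ φ : ℝ) = inner ℝ φ μ := real_inner_comm φ μ
  have key : a φ φ + τ * a μ μ + 2 * r ^ 2 = 0 := by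
    rw [hsym, hbφ] at e2; nlinarith
  have hA : a φ φ = 0 := by nlinarith [ha_psd φ, ha_psd μ, sq_nonneg r]
  have hB : a μ μ = 0 := by nlinarith [ha_psd φ, ha_psd μ, sq_nonneg r]
  have hr : r = 0 := by nlinarith [ha_psd φ, ha_psd μ, sq_nonneg r]
  have haμφ : a μ φ = 0 := by
    have hp : ∀ t : ℝ, 0 ≤ 2 * t * a μ φ := by
      intro t
      have h := ha_psd (μ + t • φ)
      simp only [map_add, map_smul, LinearMap.add_apply, LinearMap.smul_apply,
        smul_eq_mul] at h
      have h' : a φ μ = a μ φ := ha_symm φ μ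
      rw [h', hA, hB] at h
      ring_nf at h ⊢
      linarith
    have h1' := hp 1
    have h2' := hp (-1)
    linarith
  have hφ : φ = 0 := by
    have := h1 φ
    rw [haμφ] at this
    have : (inner ℝ φ φ : ℝ) = 0 := by linarith
    exact inner_self_eq_zero.mp this
  have hμ : μ = 0 := by
    have := h2 μ
    rw [hφ, hr] at this
    simp only [map_zero, LinearMap.zero_apply, zero_mul] at this
    have : (inner ℝ μ μ : ℝ) = 0 := by linarith
    exact inner_self_eq_zero.mp this
  exact ⟨hφ, hμ, hr⟩
end

section
/- Suppose (φ_h^{n+1}, μ_h^{n+1}, r_h^{n+1}) solves the coupled linear SAV system, and let (φ_{1}, μ_{1}) and (φ_{2}, μ_{2}) solve the two decoupled constant-coefficient systems: (φ₁,u) + τ(∇μ₁,∇u) = (φ_h^n, u), (μ₁,v) - (∇φ₁,∇v) = 0, and (φ₂,u) + τ(∇μ₂,∇u) = 0, (μ₂,v) - (∇φ₂,∇v) = (b, v) for all u, v in the finite element space V_h, where b = F'(φ_h^n)/√(E(φ_h^n)). If 1 - ⟪b/2, φ₂⟫ ≠ 0, then with r* = (⟪b/2, φ₁ - φ_h^n⟫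 + r_h^n)/(1 - ⟪b/2, φ₂⟫), the triple (φ₁ + r* φ₂, μ₁ + r* μ₂, r*) satisfies the coupled SAV system; i.e., the decoupled solution algorithm is consistent with the coupled scheme. -/
theorem sav_decoupled_algorithm_consistency
    {V : Type*} [NormedAddCommGroup V] [InnerProductSpace ℝ V] [FiniteDimensional ℝ V]
    (g : V →ₗ[ℝ] V →ₗ[ℝ] ℝ)
    (hg_symm : ∀ x y : V, g x y = g y x)
    (hg_psd : ∀ x : V, 0 ≤ g x x)
    (b φn : V) (rn τ : ℝ) (hτ : 0 < τ)
    (φ1 μ1 φ2 μ2 : V)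
    (hsys1a : ∀ u : V, (inner ℝ φ1 u : ℝ) + τ * g μ1 u = (inner ℝ φn u : ℝ))
    (hsys1b : ∀ v : V, (inner ℝ μ1 v : ℝ) - g φ1 v = 0)
    (hsys2a : ∀ u : V, (inner ℝ φ2 u : ℝ) + τ * g μ2 u = 0)
    (hsys2b : ∀ v : V, (inner ℝ μ2 v : ℝ) - g φ2 v = (inner ℝ b v : ℝ))
    (hden : 1 - (inner ℝ ((2⁻¹ : ℝ) • b) φ2 : ℝ) ≠ 0) :
    let rstar := ((inner ℝ ((2⁻¹ : ℝ) • b) (φ1 - φn) : ℝ) + rn) /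
      (1 - (inner ℝ ((2⁻¹ : ℝ) • b) φ2 : ℝ))
    (∀ u : V, (inner ℝ (φ1 + rstar • φ2) u : ℝ) + τ * g (μ1 + rstar • μ2) u
        = (inner ℝ φn u : ℝ)) ∧
    (∀ v : V, (inner ℝ (μ1 + rstar • μ2) v : ℝ)
        = g (φ1 + rstar • φ2) v + rstar * (inner ℝ b v : ℝ)) ∧
    rstar - (inner ℝ ((2⁻¹ : ℝ) • b) (φ1 + rstar • φ2) : ℝ)
        = rn - (inner ℝ ((2⁻¹ : ℝ) • b) φn : ℝ) := by
  intro rstar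
  have hr : rstar * (1 - (inner ℝ ((2⁻¹ : ℝ) • b) φ2 : ℝ))
      = (inner ℝ ((2⁻¹ : ℝ) • b) (φ1 - φn) : ℝ) + rn :=
    div_mul_cancel₀ _ hden
  refine ⟨?_, ?_, ?_⟩
  · intro u
    simp only [inner_add_left, inner_smul_left, map_add, map_smul, LinearMap.add_apply,
      LinearMap.smul_apply, smul_eq_mul, conj_trivial]
    linear_combination hsys1a u + rstar * hsys2a u
  · intro v
    simp only [inner_add_left, inner_smul_left, map_add, map_smul, LinearMap.add_apply,
      LinearMap.smul_apply, smul_eq_mul, conj_trivial]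
    linear_combination hsys1b v + rstar * hsys2b v
  · rw [inner_sub_right] at hr
    simp only [inner_add_right, inner_smul_right]
    linear_combination hr
end
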